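/- Let g : ℝ^d → ℝ be Lipschitz with constant L (in particular differentiable with ‖∇g‖ ≤ L suffices). Let x be a standard Gaussian random vector in ℝ^p (i.i.d. N(0,1) coordinates) and ε ~ N(0,1) independent of x. For a p×d real matrix B with BᵀB = I_d, let μ_{B,g} denote the joint law on ℝ × ℝ^p of (g(Bᵀx) + ε, x). Then for any two p×d matrices B, B′ with BᵀB = B′ᵀB′ = I_d, the Kullback–Leibler divergence satisfies KL(μ_{B,g}, μ_{B′,g}) ≤ L² ‖B − B′‖_F². -/

import Mathlib

open Matrix MeasureTheory ProbabilityTheory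

open Real ENNReal

namespace KLSingleIndexAux


noncomputable abbrev G : Measure ℝ := gaussianReal 0 1
noncomputable abbrev pdfNN : ℝ → NNReal := fun x => (gaussianPDFReal 0 1 x).toNNReal

lemma measurable_pdfNN : Measurable pdfNN := (measurable_gaussianPDFReal 0 1).real_toNNReal

lemma G_eq : G = volume.withDensity (fun x => (pdfNN x : ℝ≥0∞)) := by
  show gaussianReal 0 1 = _
  rw [gaussianReal_of_var_ne_zero 0 one_ne_zero]
  rfl

lemma pdf0_eq (x : ℝ) : gaussianPDFReal 0 1 x = (Real.sqrt (2*π))⁻¹ * Real.exp (-(1/2) * x^2) := by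
  rw [gaussianPDFReal]
  norm_num
  left; ring_nf

lemma integral_G (g : ℝ → ℝ) : ∫ t, g t ∂G = ∫ t, gaussianPDFReal 0 1 t * g t := by
  rw [G_eq, integral_withDensity_eq_integral_smul measurable_pdfNN g]
  congr 1; ext t
  simp [NNReal.smul_def, Real.coe_toNNReal _ (gaussianPDFReal_nonneg 0 1 t)]

lemma integrable_G_iff {g : ℝ → ℝ} :
    Integrable g G ↔ Integrable (fun t => g t * gaussianPDFReal 0 1 t) volume := by
  rw [G_eq]
  have H := integrable_withDensity_iff (μ := volume) (f := fun x => (pdfNN x : ℝ≥0∞))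
    (measurable_pdfNN.coe_nnreal_ennreal) (ae_of_all _ fun x => ENNReal.coe_lt_top) (g := g)
  simp only [ENNReal.coe_toReal, Real.coe_toNNReal _ (gaussianPDFReal_nonneg 0 1 _)] at H
  exact H

lemma hasDerivAt_exp_half (x : ℝ) :
    HasDerivAt (fun y : ℝ => Real.exp (-(1/2) * y^2)) (Real.exp (-(1/2)*x^2) * (-x)) x := by
  have h1 : HasDerivAt (fun y : ℝ => -(1/2) * y^2) (-x) x := by
    have := (hasDerivAt_pow 2 x).const_mul (-(1/2) : ℝ)
    simpa using this.congr_deriv (by ring)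
  exact h1.exp

lemma integrable_exp_half : Integrable (fun x : ℝ => Real.exp (-(1/2)*x^2)) :=
  integrable_exp_neg_mul_sq (by norm_num)

lemma integrable_mul_exp_half : Integrable (fun x : ℝ => x * Real.exp (-(1/2)*x^2)) :=
  integrable_mul_exp_neg_mul_sq (by norm_num)

lemma integrable_sq_exp_half : Integrable (fun x : ℝ => x^2 * Real.exp (-(1/2)*x^2)) := by
  have := integrable_rpow_mul_exp_neg_mul_sq (b := 1/2) (by norm_num) (s := 2) (by norm_num)
  apply this.congr
  filter_upwards with x
  rw [show ((2:ℝ)) = ((2:ℕ):ℝ) by norm_num, Real.rpow_natCast]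

lemma integral_mul_exp_half : ∫ x : ℝ, x * Real.exp (-(1/2)*x^2) = 0 := by
  have h := integral_eq_zero_of_hasDerivAt_of_integrable
    (f := fun x : ℝ => -(Real.exp (-(1/2) * x^2)))
    (f' := fun x : ℝ => x * Real.exp (-(1/2)*x^2)) ?_ integrable_mul_exp_half
    integrable_exp_half.neg
  · exact h
  · intro x
    exact ((hasDerivAt_exp_half x).neg).congr_deriv (by ring)

lemma integral_sq_exp_half : ∫ x : ℝ, x^2 * Real.exp (-(1/2)*x^2) = Real.sqrt (2*π) := by
  have hder : ∀ x : ℝ, HasDerivAt (fun y : ℝ => -(y * Real.exp (-(1/2) * y^2)))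
      (x^2 * Real.exp (-(1/2)*x^2) - Real.exp (-(1/2)*x^2)) x := by
    intro x
    have := ((hasDerivAt_id x).mul (hasDerivAt_exp_half x)).neg
    exact this.congr_deriv (by simp only [id_eq]; ring)
  have h := integral_eq_zero_of_hasDerivAt_of_integrable hder
    (integrable_sq_exp_half.sub integrable_exp_half) (integrable_mul_exp_half.neg)
  have h2 : ∫ x : ℝ, (x^2 * Real.exp (-(1/2)*x^2) - Real.exp (-(1/2)*x^2))
      = (∫ x : ℝ, x^2 * Real.exp (-(1/2)*x^2)) - ∫ x : ℝ, Real.exp (-(1/2)*x^2) :=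
    integral_sub integrable_sq_exp_half integrable_exp_half
  have h3 : ∫ x : ℝ, Real.exp (-(1/2)*x^2) = Real.sqrt (2*π) := by
    have := integral_gaussian (1/2)
    rw [this]; norm_num; ring
  rw [h2, h3] at h
  linarith

lemma sqrt2pi_pos : 0 < Real.sqrt (2*π) := Real.sqrt_pos.mpr (by positivity)

lemma integrable_id_G : Integrable (fun t : ℝ => t) G := by
  rw [integrable_G_iff]
  apply (integrable_mul_exp_half.const_mul ((Real.sqrt (2*π))⁻¹)).congr
  filter_upwards with t
  rw [pdf0_eq]; ring

lemma integral_id_G : ∫ t, t ∂G = 0 := by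
  rw [integral_G]
  have h : ∀ t:ℝ, gaussianPDFReal 0 1 t * t
      = (Real.sqrt (2*π))⁻¹ * (t * Real.exp (-(1/2)*t^2)) := fun t => by rw [pdf0_eq]; ring
  simp_rw [h, integral_const_mul, integral_mul_exp_half, mul_zero]

lemma integrable_sq_G : Integrable (fun t : ℝ => t^2) G := by
  rw [integrable_G_iff]
  apply (integrable_sq_exp_half.const_mul ((Real.sqrt (2*π))⁻¹)).congr
  filter_upwards with t
  rw [pdf0_eq]; ring

lemma integral_sq_G : ∫ t, t^2 ∂G = 1 := by
  rw [integral_G]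
  have h : ∀ t:ℝ, gaussianPDFReal 0 1 t * t^2
      = (Real.sqrt (2*π))⁻¹ * (t^2 * Real.exp (-(1/2)*t^2)) := fun t => by rw [pdf0_eq]; ring
  simp_rw [h, integral_const_mul, integral_sq_exp_half]
  exact inv_mul_cancel₀ sqrt2pi_pos.ne'

lemma ratio_mul_pdf (c e : ℝ) :
    ENNReal.ofReal (Real.exp (e^2/2 - (e-c)^2/2)) * (pdfNN e : ℝ≥0∞)
      = ENNReal.ofReal (gaussianPDFReal c 1 e) := by
  have hco : (pdfNN e : ℝ≥0∞) = ENNReal.ofReal (gaussianPDFReal 0 1 e) := rfl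
  rw [hco, ← ENNReal.ofReal_mul (Real.exp_nonneg _)]
  congr 1
  rw [gaussianPDFReal, gaussianPDFReal, mul_left_comm, ← Real.exp_add]
  push_cast
  congr 2
  ring

lemma lintegral_shift (c : ℝ) {f : ℝ → ℝ≥0∞} (hf : Measurable f) :
    ∫⁻ e, f e * ENNReal.ofReal (Real.exp (e^2/2 - (e-c)^2/2)) ∂G
      = ∫⁻ e, f (e + c) ∂G := by
  have hratio : Measurable fun e : ℝ => ENNReal.ofReal (Real.exp (e^2/2 - (e-c)^2/2)) := by
    fun_prop
  have hmap : (gaussianReal 0 1).map (· + c) = gaussianReal c 1 := by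
    rw [gaussianReal_map_add_const c, zero_add]
  calc ∫⁻ e, f e * ENNReal.ofReal (Real.exp (e^2/2 - (e-c)^2/2)) ∂G
      = ∫⁻ e, gaussianPDF c 1 e * f e ∂volume := by
        rw [G_eq, lintegral_withDensity_eq_lintegral_mul _ measurable_pdfNN.coe_nnreal_ennreal
          (by exact hf.mul hratio : Measurable fun e => f e * ENNReal.ofReal (Real.exp (e^2/2 - (e-c)^2/2)))]
        congr 1
        ext e
        simp only [Pi.mul_apply]
        rw [mul_comm ((pdfNN e : ℝ≥0∞)), mul_assoc, ratio_mul_pdf c e, gaussianPDF_def,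
          mul_comm]
    _ = ∫⁻ e, f e ∂(gaussianReal c 1) := by
        rw [gaussianReal_of_var_ne_zero c one_ne_zero,
          lintegral_withDensity_eq_lintegral_mul _ (measurable_gaussianPDF c 1) hf]
        rfl
    _ = ∫⁻ e, f (e + c) ∂G := by
        rw [← hmap, lintegral_map hf (measurable_add_const c)]

section PiMoments

noncomputable local instance realGaussSpace : MeasureSpace ℝ := ⟨G⟩

local instance : SigmaFinite (volume : Measure ℝ) :=
  inferInstanceAs (SigmaFinite G)

local instance : IsFiniteMeasure (volume : Measure ℝ) :=
  inferInstanceAs (IsFiniteMeasure G)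

lemma coord_mul (p : ℕ) (i k : Fin p) :
    Integrable (fun v : Fin p → ℝ => v i * v k) (Measure.pi fun _ => G) ∧
    ∫ v, v i * v k ∂(Measure.pi fun _ => G) = if i = k then 1 else 0 := by
  by_cases hik : i = k
  · subst hik
    set f : Fin p → ℝ → ℝ := fun l t => if l = i then t^2 else 1 with hf
    have hprod : ∀ v : Fin p → ℝ, (∏ l, f l (v l)) = v i * v i := by
      intro v
      rw [Finset.prod_eq_single i (fun b _ hb => by simp [hf, hb]) (by simp)]
      simp [hf, sq]
    have hint : ∀ l, Integrable (f l) (volume : Measure ℝ) := by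
      intro l; by_cases hl : l = i
      · subst hl; have h0 : Integrable (fun t : ℝ => t^2) (volume : Measure ℝ) := integrable_sq_G; simpa [hf] using h0
      · simpa [hf, hl] using (integrable_const (μ := (volume : Measure ℝ)) (1:ℝ))
    have h1 : Integrable (fun v : Fin p → ℝ => ∏ l, f l (v l)) (Measure.pi fun _ => G) :=
      Integrable.fintype_prod hint
    have h2 : ∫ v : Fin p → ℝ, (∏ l, f l (v l)) ∂(Measure.pi fun _ => G) = ∏ l, ∫ t, f l t ∂G :=
      integral_fintype_prod_eq_prod f
    have h3 : (∏ l, ∫ t, f l t ∂G) = 1 := by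
      rw [Finset.prod_eq_single i (fun b _ hb => by simp [hf, hb]) (by simp)]
      simpa [hf] using integral_sq_G
    constructor
    · exact h1.congr (ae_of_all _ fun v => hprod v)
    · have hcong : ∫ v : Fin p → ℝ, (∏ l, f l (v l)) ∂(Measure.pi fun _ => G)
          = ∫ v : Fin p → ℝ, v i * v i ∂(Measure.pi fun _ => G) :=
        integral_congr_ae (ae_of_all _ fun v => hprod v)
      rw [if_pos rfl, ← hcong, h2, h3]
  · set f : Fin p → ℝ → ℝ := fun l t => if l = i ∨ l = k then t else 1 with hf
    have hprod : ∀ v : Fin p → ℝ, (∏ l, f l (v l)) = v i * v k := by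
      intro v
      rw [← Finset.prod_subset (Finset.subset_univ ({i, k} : Finset (Fin p)))
        (fun b _ hb => by
          simp only [Finset.mem_insert, Finset.mem_singleton] at hb
          push_neg at hb
          simp [hf, hb.1, hb.2])]
      rw [Finset.prod_insert (by simp [hik])]
      simp [hf, hik]
    have hint : ∀ l, Integrable (f l) (volume : Measure ℝ) := by
      intro l; by_cases hl : l = i ∨ l = k
      · have h0 : Integrable (fun t : ℝ => t) (volume : Measure ℝ) := integrable_id_G; simpa [hf, hl] using h0
      · simpa [hf, hl] using (integrable_const (μ := (volume : Measure ℝ)) (1:ℝ))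
    have h1 : Integrable (fun v : Fin p → ℝ => ∏ l, f l (v l)) (Measure.pi fun _ => G) :=
      Integrable.fintype_prod hint
    have h2 : ∫ v : Fin p → ℝ, (∏ l, f l (v l)) ∂(Measure.pi fun _ => G) = ∏ l, ∫ t, f l t ∂G :=
      integral_fintype_prod_eq_prod f
    have h3 : (∏ l, ∫ t, f l t ∂G) = 0 := by
      apply Finset.prod_eq_zero (Finset.mem_univ i)
      simpa [hf] using integral_id_G
    constructor
    · exact h1.congr (ae_of_all _ fun v => hprod v)
    · have hcong : ∫ v : Fin p → ℝ, (∏ l, f l (v l)) ∂(Measure.pi fun _ => G)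
          = ∫ v : Fin p → ℝ, v i * v k ∂(Measure.pi fun _ => G) :=
        integral_congr_ae (ae_of_all _ fun v => hprod v)
      rw [if_neg hik, ← hcong, h2, h3]

end PiMoments

lemma map_withDensity (p : ℕ) (a b : (Fin p → ℝ) → ℝ) (ha : Measurable a) (hb : Measurable b) :
    (G.prod (Measure.pi fun _ : Fin p => G)).map
        (fun q : ℝ × (Fin p → ℝ) => (a q.2 + q.1, q.2))
      = ((G.prod (Measure.pi fun _ : Fin p => G)).map
          (fun q : ℝ × (Fin p → ℝ) => (b q.2 + q.1, q.2))).withDensity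
          (fun q => ENNReal.ofReal (Real.exp ((q.1 - b q.2)^2/2 - (q.1 - a q.2)^2/2))) := by
  set γ : Measure (Fin p → ℝ) := Measure.pi fun _ : Fin p => G with hγ
  set pm : Measure (ℝ × (Fin p → ℝ)) := G.prod γ with hpm
  set T : ℝ × (Fin p → ℝ) → ℝ × (Fin p → ℝ) := fun q => (a q.2 + q.1, q.2) with hTdef
  set T' : ℝ × (Fin p → ℝ) → ℝ × (Fin p → ℝ) := fun q => (b q.2 + q.1, q.2) with hT'def
  have hT : Measurable T := ((ha.comp measurable_snd).add measurable_fst).prodMk measurable_snd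
  have hT' : Measurable T' := ((hb.comp measurable_snd).add measurable_fst).prodMk measurable_snd
  set ρ : ℝ × (Fin p → ℝ) → ℝ≥0∞ :=
    fun q => ENNReal.ofReal (Real.exp ((q.1 - b q.2)^2/2 - (q.1 - a q.2)^2/2)) with hρdef
  have hρ : Measurable ρ := by
    apply ENNReal.measurable_ofReal.comp
    apply Real.measurable_exp.comp
    exact (((measurable_fst.sub (hb.comp measurable_snd)).pow_const 2).div_const 2).sub
      (((measurable_fst.sub (ha.comp measurable_snd)).pow_const 2).div_const 2)
  ext s hs
  set F : (Fin p → ℝ) → ℝ → ℝ≥0∞ := fun v y => s.indicator (fun _ => (1:ℝ≥0∞)) (y, v) with hFdef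
  have hF : ∀ v, Measurable (F v) := fun v =>
    (measurable_const.indicator hs).comp (measurable_id.prodMk measurable_const)
  calc (pm.map T) s
      = pm (T ⁻¹' s) := Measure.map_apply hT hs
    _ = ∫⁻ z, (T ⁻¹' s).indicator (fun _ => (1:ℝ≥0∞)) z ∂pm := by
        rw [lintegral_indicator (hT hs), setLIntegral_one]
    _ = ∫⁻ z, s.indicator (fun _ => (1:ℝ≥0∞)) (T z) ∂pm := by
        apply lintegral_congr; intro z
        by_cases hz : T z ∈ s
        · rw [Set.indicator_of_mem hz, Set.indicator_of_mem (Set.mem_preimage.mpr hz)]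
        · rw [Set.indicator_of_notMem hz,
            Set.indicator_of_notMem (fun hz' => hz (Set.mem_preimage.mp hz'))]
    _ = ∫⁻ v, ∫⁻ e, s.indicator (fun _ => (1:ℝ≥0∞)) (T (e, v)) ∂G ∂γ :=
        lintegral_prod_symm' _ ((measurable_const.indicator hs).comp hT)
    _ = ∫⁻ v, ∫⁻ e, s.indicator ρ (T' (e, v)) ∂G ∂γ := by
        apply lintegral_congr; intro v
        have hfmeas : Measurable (fun y : ℝ => F v (b v + y)) :=
          (hF v).comp (measurable_id.const_add (b v))
        have hshift := lintegral_shift (a v - b v) (f := fun y => F v (b v + y)) hfmeas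
        calc ∫⁻ e, s.indicator (fun _ => (1:ℝ≥0∞)) (T (e, v)) ∂G
            = ∫⁻ e, F v (a v + e) ∂G := rfl
          _ = ∫⁻ e, F v (b v + (e + (a v - b v))) ∂G := by
              apply lintegral_congr; intro e
              rw [show b v + (e + (a v - b v)) = a v + e by ring]
          _ = ∫⁻ e, F v (b v + e)
                * ENNReal.ofReal (Real.exp (e^2/2 - (e - (a v - b v))^2/2)) ∂G := hshift.symm
          _ = ∫⁻ e, s.indicator ρ (T' (e, v)) ∂G := by
              apply lintegral_congr; intro e
              show F v (b v + e) * _ = s.indicator ρ (b v + e, v)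
              simp only [hFdef, hρdef]
              by_cases hmem : ((b v + e, v) : ℝ × (Fin p → ℝ)) ∈ s
              · rw [Set.indicator_of_mem hmem, Set.indicator_of_mem hmem, one_mul]
                congr 2
                ring
              · rw [Set.indicator_of_notMem hmem, Set.indicator_of_notMem hmem, zero_mul]
    _ = ∫⁻ z, s.indicator ρ (T' z) ∂pm := (lintegral_prod_symm' _ ((hρ.indicator hs).comp hT')).symm
    _ = ∫⁻ z, s.indicator ρ z ∂(pm.map T') := (lintegral_map (hρ.indicator hs) hT').symm
    _ = ∫⁻ z in s, ρ z ∂(pm.map T') := by rw [lintegral_indicator hs]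
    _ = ((pm.map T').withDensity ρ) s := (withDensity_apply ρ hs).symm

lemma sq_sum_moment (p : ℕ) (t : Fin p → ℝ) :
    Integrable (fun v : Fin p → ℝ => (∑ i, t i * v i)^2) (Measure.pi fun _ => G) ∧
    ∫ v, (∑ i, t i * v i)^2 ∂(Measure.pi fun _ => G) = ∑ i, (t i)^2 := by
  have hexp : ∀ v : Fin p → ℝ, (∑ i, t i * v i)^2 = ∑ i, ∑ k, (t i * t k) * (v i * v k) := by
    intro v
    rw [sq, Finset.sum_mul_sum]
    exact Finset.sum_congr rfl fun i _ => Finset.sum_congr rfl fun k _ => by ring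
  have hterms : ∀ i ∈ (Finset.univ : Finset (Fin p)),
      Integrable (fun v : Fin p → ℝ => ∑ k, (t i * t k) * (v i * v k))
        (Measure.pi fun _ => G) := fun i _ =>
    integrable_finset_sum _ fun k _ => ((coord_mul p i k).1.const_mul _)
  have hint : Integrable (fun v : Fin p → ℝ => ∑ i, ∑ k, (t i * t k) * (v i * v k))
      (Measure.pi fun _ => G) := integrable_finset_sum _ hterms
  constructor
  · exact hint.congr (ae_of_all _ fun v => (hexp v).symm)
  · rw [integral_congr_ae (ae_of_all _ fun v => hexp v), integral_finset_sum _ hterms]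
    refine Finset.sum_congr rfl fun i _ => ?_
    rw [integral_finset_sum _ (fun k _ => ((coord_mul p i k).1.const_mul _))]
    have hterm : ∀ k : Fin p, ∫ v, (t i * t k) * (v i * v k) ∂(Measure.pi fun _ => G)
        = if i = k then t i^2 else 0 := by
      intro k
      rw [integral_const_mul, (coord_mul p i k).2]
      split_ifs with hik
      · subst hik; ring
      · ring
    rw [Finset.sum_congr rfl fun k _ => hterm k]
    simp

end KLSingleIndexAux

open KLSingleIndexAux

/-- Frobenius norm of a real matrix: `‖M‖_F = (tr (M Mᵀ))^{1/2}`. -/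
noncomputable def frobNorm {m n : Type*} [Fintype m] [Fintype n]
    (M : Matrix m n ℝ) : ℝ :=
  Real.sqrt (Matrix.trace (M * Mᵀ))

/-- Kullback–Leibler divergence `KL(μ, ν) = ∫ log(dμ/dν) dμ` (for `μ ≪ ν`). -/
noncomputable def klDiv {E : Type*} [MeasurableSpace E] (μ ν : Measure E) : ℝ :=
  ∫ x, Real.log (μ.rnDeriv ν x).toReal ∂μ

/-- Let `g : ℝ^d → ℝ` be Lipschitz with constant `L` for the Euclidean
distance. Let `x` be a standard Gaussian vector in `ℝ^p`, `ε ~ N(0,1)` independent of `x`, and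
for a `p×d` matrix `B` with orthonormal columns let `μ_{B,g}` be the joint law of
`(g(Bᵀx) + ε, x)`. Then for any two such matrices `B, B′`,
`KL(μ_{B,g}, μ_{B′,g}) ≤ L²‖B − B′‖_F²`. -/
theorem klDiv_single_index_le
    {Ω : Type*} [MeasurableSpace Ω] (μ : Measure Ω) [IsProbabilityMeasure μ]
    (p d : ℕ) (g : (Fin d → ℝ) → ℝ) (L : ℝ) (hL : 0 ≤ L)
    (hg : ∀ v w : Fin d → ℝ, |g v - g w| ≤ L * Real.sqrt (∑ i, (v i - w i) ^ 2))
    (x : Ω → Fin p → ℝ) (ε : Ω → ℝ)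
    (hmx : Measurable x) (hmε : Measurable ε)
    (hx : μ.map x = Measure.pi fun _ : Fin p => gaussianReal 0 1)
    (hε : μ.map ε = gaussianReal 0 1)
    (hindep : IndepFun x ε μ)
    (B B' : Matrix (Fin p) (Fin d) ℝ) (hB : Bᵀ * B = 1) (hB' : B'ᵀ * B' = 1) :
    klDiv (μ.map fun ω => (g (Bᵀ.mulVec (x ω)) + ε ω, x ω))
        (μ.map fun ω => (g (B'ᵀ.mulVec (x ω)) + ε ω, x ω))
      ≤ L ^ 2 * frobNorm (B - B') ^ 2 := by
  -- continuity of g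
  have hgc : Continuous g := by
    have hlip : LipschitzWith (Real.toNNReal (L * Real.sqrt d)) g := by
      apply LipschitzWith.of_dist_le_mul
      intro v w
      rw [Real.dist_eq]
      have h1 : ∀ i, (v i - w i)^2 ≤ (dist v w)^2 := by
        intro i
        have h := dist_le_pi_dist v w i
        rw [Real.dist_eq] at h
        calc (v i - w i)^2 = |v i - w i|^2 := (sq_abs _).symm
          _ ≤ dist v w ^ 2 := by gcongr
      have h2 : Real.sqrt (∑ i, (v i - w i)^2) ≤ Real.sqrt ((d : ℝ) * dist v w ^ 2) := by
        apply Real.sqrt_le_sqrt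
        calc ∑ i, (v i - w i)^2 ≤ ∑ _i : Fin d, dist v w ^ 2 :=
              Finset.sum_le_sum fun i _ => h1 i
          _ = (d : ℝ) * dist v w ^ 2 := by simp [Finset.sum_const, mul_comm]
      calc |g v - g w| ≤ L * Real.sqrt (∑ i, (v i - w i)^2) := hg v w
        _ ≤ L * Real.sqrt ((d:ℝ) * dist v w ^ 2) := by
            exact mul_le_mul_of_nonneg_left h2 hL
        _ = (L * Real.sqrt d) * dist v w := by
            rw [Real.sqrt_mul (Nat.cast_nonneg d), Real.sqrt_sq dist_nonneg]; ring
        _ = (Real.toNNReal (L * Real.sqrt d) : ℝ) * dist v w := by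
            rw [Real.coe_toNNReal _ (by positivity)]
    exact hlip.continuous
  have hmv : ∀ (C : Matrix (Fin d) (Fin p) ℝ), Continuous fun v : Fin p → ℝ => C.mulVec v := by
    intro C
    apply continuous_pi; intro j
    simp only [Matrix.mulVec, dotProduct]
    exact continuous_finset_sum _ fun i _ => continuous_const.mul (continuous_apply i)
  set γ : Measure (Fin p → ℝ) := Measure.pi fun _ : Fin p => gaussianReal 0 1 with hγ
  set pm : Measure (ℝ × (Fin p → ℝ)) := (gaussianReal 0 1).prod γ with hpm
  set a : (Fin p → ℝ) → ℝ := fun v => g (Bᵀ.mulVec v) with hadef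
  set b : (Fin p → ℝ) → ℝ := fun v => g (B'ᵀ.mulVec v) with hbdef
  have hac : Continuous a := hgc.comp (hmv Bᵀ)
  have hbc : Continuous b := hgc.comp (hmv B'ᵀ)
  set T : ℝ × (Fin p → ℝ) → ℝ × (Fin p → ℝ) := fun q => (a q.2 + q.1, q.2) with hTdef
  set T' : ℝ × (Fin p → ℝ) → ℝ × (Fin p → ℝ) := fun q => (b q.2 + q.1, q.2) with hT'def
  have hT : Measurable T :=
    ((hac.measurable.comp measurable_snd).add measurable_fst).prodMk measurable_snd
  have hT' : Measurable T' :=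
    ((hbc.measurable.comp measurable_snd).add measurable_fst).prodMk measurable_snd
  have hpair : μ.map (fun ω => (ε ω, x ω)) = pm := by
    rw [hpm, ← hε, ← hx]
    exact (indepFun_iff_map_prod_eq_prod_map_map hmε.aemeasurable hmx.aemeasurable).mp hindep.symm
  have hmB : μ.map (fun ω => (g (Bᵀ.mulVec (x ω)) + ε ω, x ω)) = pm.map T := by
    rw [← hpair, Measure.map_map hT (hmε.prodMk hmx)]
    rfl
  have hmB' : μ.map (fun ω => (g (B'ᵀ.mulVec (x ω)) + ε ω, x ω)) = pm.map T' := by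
    rw [← hpair, Measure.map_map hT' (hmε.prodMk hmx)]
    rfl
  set ρ : ℝ × (Fin p → ℝ) → ℝ≥0∞ :=
    fun q => ENNReal.ofReal (Real.exp ((q.1 - b q.2)^2/2 - (q.1 - a q.2)^2/2)) with hρdef
  have hρmeas : Measurable ρ := by
    apply ENNReal.measurable_ofReal.comp
    apply Real.measurable_exp.comp
    exact (((measurable_fst.sub (hbc.measurable.comp measurable_snd)).pow_const 2).div_const 2).sub
      (((measurable_fst.sub (hac.measurable.comp measurable_snd)).pow_const 2).div_const 2)
  have hwd : pm.map T = (pm.map T').withDensity ρ :=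
    map_withDensity p a b hac.measurable hbc.measurable
  have hprobT' : IsProbabilityMeasure (pm.map T') := Measure.isProbabilityMeasure_map hT'.aemeasurable
  have hrn : (pm.map T).rnDeriv (pm.map T') =ᵐ[pm.map T'] ρ := by
    rw [hwd]
    exact Measure.rnDeriv_withDensity _ hρmeas
  have habs : pm.map T ≪ pm.map T' := by
    rw [hwd]; exact withDensity_absolutelyContinuous _ _
  have hrn' : (pm.map T).rnDeriv (pm.map T') =ᵐ[pm.map T] ρ := habs.ae_le hrn
  set φ : ℝ × (Fin p → ℝ) → ℝ := fun q => (q.1 - b q.2)^2/2 - (q.1 - a q.2)^2/2 with hφdef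
  have hφc : Continuous φ :=
    (((continuous_fst.sub (hbc.comp continuous_snd)).pow 2).div_const 2).sub
      (((continuous_fst.sub (hac.comp continuous_snd)).pow 2).div_const 2)
  have hkl : klDiv (pm.map T) (pm.map T') = ∫ q, φ q ∂(pm.map T) := by
    unfold klDiv
    apply integral_congr_ae
    filter_upwards [hrn'] with q hq
    rw [hq]
    simp only [hρdef, hφdef]
    rw [ENNReal.toReal_ofReal (Real.exp_nonneg _), Real.log_exp]
  have hmap2 : ∫ q, φ q ∂(pm.map T) = ∫ z, φ (T z) ∂pm :=
    integral_map hT.aemeasurable hφc.aestronglyMeasurable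
  set c : (Fin p → ℝ) → ℝ := fun v => a v - b v with hcdef
  have hcc : Continuous c := hac.sub hbc
  have hTφ : ∀ z : ℝ × (Fin p → ℝ), φ (T z) = c z.2^2/2 + c z.2 * z.1 := by
    intro z
    simp only [hφdef, hTdef, hcdef]
    ring
  set M : Matrix (Fin p) (Fin d) ℝ := B - B' with hMdef
  have hMv : ∀ (v : Fin p → ℝ) (j : Fin d), Mᵀ.mulVec v j = ∑ i, M i j * v i := by
    intro v j
    simp [Matrix.mulVec, dotProduct, Matrix.transpose_apply]
  set h : (Fin p → ℝ) → ℝ := fun v => ∑ j, (Mᵀ.mulVec v j)^2 with hhdef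
  have hh0 : ∀ v, 0 ≤ h v := fun v => Finset.sum_nonneg fun j _ => sq_nonneg _
  have hc2 : ∀ v, c v^2 ≤ L^2 * h v := by
    intro v
    have habs2 : |c v| ≤ L * Real.sqrt (h v) := by
      calc |c v| = |g (Bᵀ.mulVec v) - g (B'ᵀ.mulVec v)| := rfl
        _ ≤ L * Real.sqrt (∑ j, (Bᵀ.mulVec v j - B'ᵀ.mulVec v j)^2) := hg _ _
        _ = L * Real.sqrt (h v) := by
            congr 2
            refine Finset.sum_congr rfl fun j _ => ?_
            congr 1
            rw [hMdef, Matrix.transpose_sub, Matrix.sub_mulVec]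
            rfl
    calc c v^2 = |c v|^2 := (sq_abs _).symm
      _ ≤ (L * Real.sqrt (h v))^2 := by
          apply pow_le_pow_left₀ (abs_nonneg _) habs2
      _ = L^2 * h v := by rw [mul_pow, Real.sq_sqrt (hh0 v)]
  have hmom : ∀ j : Fin d,
      Integrable (fun v : Fin p → ℝ => (Mᵀ.mulVec v j)^2) γ ∧
      ∫ v, (Mᵀ.mulVec v j)^2 ∂γ = ∑ i, (M i j)^2 := by
    intro j
    have hmm := sq_sum_moment p (fun i => M i j)
    constructor
    · exact hmm.1.congr (ae_of_all _ fun v => by simp only [hMv])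
    · rw [integral_congr_ae (ae_of_all _ (fun v => by simp only [hMv]) :
        (fun v : Fin p → ℝ => (Mᵀ.mulVec v j)^2) =ᵐ[γ] fun v => (∑ i, M i j * v i)^2)]
      exact hmm.2
  have hh_int : Integrable h γ := integrable_finset_sum _ fun j _ => (hmom j).1
  have hh_val : ∫ v, h v ∂γ = ∑ j, ∑ i, (M i j)^2 := by
    rw [hhdef]
    rw [integral_finset_sum _ fun j _ => (hmom j).1]
    exact Finset.sum_congr rfl fun j _ => (hmom j).2
  have hc2_int : Integrable (fun v => c v^2) γ := by
    apply Integrable.mono (hh_int.const_mul (L^2)) ((hcc.pow 2).aestronglyMeasurable)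
    filter_upwards with v
    rw [Real.norm_eq_abs, Real.norm_eq_abs, abs_of_nonneg (sq_nonneg _),
      abs_of_nonneg (mul_nonneg (sq_nonneg L) (hh0 v))]
    exact hc2 v
  have hc_int : Integrable c γ := by
    apply Integrable.mono ((integrable_const (1:ℝ)).add hc2_int) hcc.aestronglyMeasurable
    filter_upwards with v
    simp only [Real.norm_eq_abs, Pi.add_apply]
    rw [abs_of_nonneg (by positivity : (0:ℝ) ≤ 1 + c v^2)]
    nlinarith [sq_abs (c v), sq_nonneg (|c v| - 1)]
  have i1 : Integrable (fun z : ℝ × (Fin p → ℝ) => c z.2^2/2) pm := by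
    apply ((integrable_const (μ := gaussianReal 0 1) (1:ℝ)).mul_prod (hc2_int.div_const 2)).congr
    filter_upwards with z
    rw [one_mul]
  have i2 : Integrable (fun z : ℝ × (Fin p → ℝ) => c z.2 * z.1) pm := by
    apply (integrable_id_G.mul_prod hc_int).congr
    filter_upwards with z
    rw [mul_comm]
  have hval : ∫ z, (c z.2^2/2 + c z.2 * z.1) ∂pm = (∫ v, c v^2 ∂γ)/2 := by
    rw [integral_add i1 i2]
    have e1 : ∫ z : ℝ × (Fin p → ℝ), c z.2^2/2 ∂pm = (∫ v, c v^2 ∂γ)/2 := by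
      have hp := integral_prod_mul (μ := gaussianReal 0 1) (ν := γ)
        (fun _ : ℝ => (1:ℝ)) (fun v => c v^2/2)
      simp only [one_mul] at hp
      rw [hp, integral_const]
      simp [integral_div]
    have e2 : ∫ z : ℝ × (Fin p → ℝ), c z.2 * z.1 ∂pm = 0 := by
      have hcomm : ∫ z : ℝ × (Fin p → ℝ), c z.2 * z.1 ∂pm
          = ∫ z : ℝ × (Fin p → ℝ), z.1 * c z.2 ∂pm :=
        integral_congr_ae (ae_of_all _ fun z => mul_comm _ _)
      rw [hcomm, integral_prod_mul (μ := gaussianReal 0 1) (ν := γ) (fun e : ℝ => e) c,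
        integral_id_G, zero_mul]
    rw [e1, e2, add_zero]
  have hfinal : (∫ v, c v^2 ∂γ) ≤ L^2 * ∑ j, ∑ i, (M i j)^2 := by
    calc ∫ v, c v^2 ∂γ ≤ ∫ v, L^2 * h v ∂γ :=
          integral_mono hc2_int (hh_int.const_mul _) (fun v => hc2 v)
      _ = L^2 * ∑ j, ∑ i, (M i j)^2 := by rw [integral_const_mul, hh_val]
  have hS0 : (0:ℝ) ≤ ∑ j, ∑ i, (M i j)^2 :=
    Finset.sum_nonneg fun j _ => Finset.sum_nonneg fun i _ => sq_nonneg _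
  have hfrob : frobNorm (B - B') ^ 2 = ∑ j, ∑ i, (M i j)^2 := by
    have htr : Matrix.trace ((B - B') * (B - B')ᵀ) = ∑ j, ∑ i, (M i j)^2 := by
      simp only [Matrix.trace, Matrix.diag_apply, Matrix.mul_apply, Matrix.transpose_apply]
      rw [Finset.sum_comm]
      exact Finset.sum_congr rfl fun j _ => Finset.sum_congr rfl fun i _ => by
        rw [← hMdef]; ring
    rw [frobNorm, Real.sq_sqrt (by rw [htr]; exact hS0)]
    exact htr
  rw [hmB, hmB']
  calc klDiv (pm.map T) (pm.map T') = ∫ q, φ q ∂(pm.map T) := hkl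
    _ = ∫ z, φ (T z) ∂pm := hmap2
    _ = ∫ z : ℝ × (Fin p → ℝ), (c z.2^2/2 + c z.2 * z.1) ∂pm :=
        integral_congr_ae (ae_of_all _ fun z => hTφ z)
    _ = (∫ v, c v^2 ∂γ)/2 := hval
    _ ≤ (L^2 * ∑ j, ∑ i, (M i j)^2)/2 := by linarith
    _ ≤ L^2 * ∑ j, ∑ i, (M i j)^2 := by
        have hnn : (0:ℝ) ≤ L^2 * ∑ j, ∑ i, (M i j)^2 := mul_nonneg (sq_nonneg L) hS0
        linarith
    _ = L^2 * frobNorm (B - B')^2 := by rw [hfrob]
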